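/- (Tender measurement lemma) Let (ρ_a)_{a∈A} be a finite family of density operators on ℂ^D, let (D_b)_{b∈B} be a POVM (a finite family of positive semidefinite operators on ℂ^D with ∑_{b∈B} D_b = I), let φ : A → B be a map, and let λ > 0 be such that 1 − Tr(ρ_a D_{φ(a)}) ≤ λ for every a ∈ A. Then for every a ∈ A: ‖ρ_a − ∑_{b∈B} √(D_b) ρ_a √(D_b)‖₁ ≤ √(8λ) + λ. -/

import Mathlib

open scoped ComplexOrder Matrix

namespace QIT

variable {d : ℕ}

/-- A density operator: positive semidefinite with trace 1. -/
def IsDensity (ρ : Matrix (Fin d) (Fin d) ℂ) : Prop :=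
  ρ.PosSemidef ∧ ρ.trace = 1

/-- A pure state: a rank-one orthogonal projection. -/
def IsPure (ρ : Matrix (Fin d) (Fin d) ℂ) : Prop :=
  ρ.IsHermitian ∧ ρ * ρ = ρ ∧ ρ.rank = 1

/-- The positive semidefinite square root (the former `Matrix.PosSemidef.sqrt`). -/
noncomputable def psdSqrt {n : Type*} [Fintype n] [DecidableEq n] {A : Matrix n n ℂ}
    (hA : A.PosSemidef) : Matrix n n ℂ :=
  (hA.isHermitian.eigenvectorUnitary : Matrix n n ℂ) *
    Matrix.diagonal ((↑) ∘ (√·) ∘ hA.isHermitian.eigenvalues) *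
    (star hA.isHermitian.eigenvectorUnitary : Matrix n n ℂ)

/-- Trace norm of a matrix: `Tr √(Aᴴ A)`. -/
noncomputable def traceNorm (A : Matrix (Fin d) (Fin d) ℂ) : ℝ :=
  ((psdSqrt (Matrix.posSemidef_conjTranspose_mul_self A)).trace).re

open scoped MatrixOrder in
lemma psdSqrt_eq_cfc {n : Type*} [Fintype n] [DecidableEq n] {A : Matrix n n ℂ}
    (hA : A.PosSemidef) : psdSqrt hA = CFC.sqrt A := by
  rw [CFC.sqrt_eq_cfc, cfc_nnreal_eq_real _ A, hA.1.cfc_eq]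
  simp only [Matrix.IsHermitian.cfc, Unitary.conjStarAlgAut_apply, psdSqrt]
  congr 3
  funext i
  simp [Real.coe_sqrt, hA.eigenvalues_nonneg i]

open scoped MatrixOrder in
lemma psdSqrt_mul_self {n : Type*} [Fintype n] [DecidableEq n] {A : Matrix n n ℂ}
    (hA : A.PosSemidef) : psdSqrt hA * psdSqrt hA = A := by
  rw [psdSqrt_eq_cfc]; exact CFC.sqrt_mul_sqrt_self A hA.nonneg

open scoped MatrixOrder in
lemma posSemidef_psdSqrt {n : Type*} [Fintype n] [DecidableEq n] {A : Matrix n n ℂ}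
    (hA : A.PosSemidef) : (psdSqrt hA).PosSemidef := by
  rw [psdSqrt_eq_cfc]; exact Matrix.nonneg_iff_posSemidef.mp (CFC.sqrt_nonneg A)

open scoped MatrixOrder in
lemma eq_psdSqrt_of_sq_eq {n : Type*} [Fintype n] [DecidableEq n] {A B : Matrix n n ℂ}
    (hA : A.PosSemidef) (hB : B.PosSemidef) (h : A ^ 2 = B) : A = psdSqrt hB := by
  rw [psdSqrt_eq_cfc, eq_comm, CFC.sqrt_eq_iff _ _ hB.nonneg hA.nonneg, ← sq, h]


section Aux

open Matrix Complex

set_option linter.unusedSectionVars false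
set_option linter.unusedVariables false
set_option maxHeartbeats 1000000

variable {n : Type*} [Fintype n] [DecidableEq n]

lemma trace_conjTranspose_mul (A B : Matrix n n ℂ) :
    (Aᴴ * B).trace = ∑ p : n × n, (starRingEnd ℂ) (A p.1 p.2) * B p.1 p.2 := by
  rw [← Finset.univ_product_univ, Finset.sum_product]
  rw [Matrix.trace]
  simp only [Matrix.diag, Matrix.mul_apply, Matrix.conjTranspose_apply]
  rw [Finset.sum_comm]
  simp [RingHom.coe_coe]

lemma retr_conjTranspose_mul_self (A : Matrix n n ℂ) :
    ((Aᴴ * A).trace).re = ∑ p : n × n, ‖A p.1 p.2‖ ^ 2 := by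
  rw [trace_conjTranspose_mul, Complex.re_sum]
  refine Finset.sum_congr rfl fun p _ => ?_
  rw [← Complex.normSq_eq_conj_mul_self, Complex.ofReal_re, Complex.normSq_eq_norm_sq]

lemma trace_CS (A B : Matrix n n ℂ) :
    |((Aᴴ * B).trace).re| ≤ Real.sqrt (((Aᴴ * A).trace).re) * Real.sqrt (((Bᴴ * B).trace).re) := by
  set x : EuclideanSpace ℂ (n × n) := (WithLp.equiv 2 _).symm (fun p : n × n => A p.1 p.2)
  set y : EuclideanSpace ℂ (n × n) := (WithLp.equiv 2 _).symm (fun p : n × n => B p.1 p.2)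
  have hinner : (inner ℂ x y) = (Aᴴ * B).trace := by
    rw [trace_conjTranspose_mul]
    simp [x, y, PiLp.inner_apply, RCLike.inner_apply]
    exact Finset.sum_congr rfl fun p _ => mul_comm _ _
  have hx : ‖x‖ = Real.sqrt (((Aᴴ * A).trace).re) := by
    rw [EuclideanSpace.norm_eq, retr_conjTranspose_mul_self]
    rfl
  have hy : ‖y‖ = Real.sqrt (((Bᴴ * B).trace).re) := by
    rw [EuclideanSpace.norm_eq, retr_conjTranspose_mul_self]
    rfl
  calc |((Aᴴ * B).trace).re| = |(inner ℂ x y).re| := by rw [hinner]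
    _ ≤ ‖(inner ℂ x y)‖ := Complex.abs_re_le_norm _
    _ ≤ ‖x‖ * ‖y‖ := norm_inner_le_norm x y
    _ = _ := by rw [hx, hy]

lemma unit_star_mul {U : Matrix n n ℂ} (hU : U ∈ Matrix.unitaryGroup n ℂ) : Uᴴ * U = 1 := by
  rw [← Matrix.star_eq_conjTranspose]
  exact (Matrix.mem_unitaryGroup_iff').mp hU

lemma unit_mul_star {U : Matrix n n ℂ} (hU : U ∈ Matrix.unitaryGroup n ℂ) : U * Uᴴ = 1 := by
  rw [← Matrix.star_eq_conjTranspose]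
  exact (Matrix.mem_unitaryGroup_iff).mp hU

lemma trace_conj {U : Matrix n n ℂ} (hU : U ∈ Matrix.unitaryGroup n ℂ) (E : Matrix n n ℂ) :
    (U * E * Uᴴ).trace = E.trace := by
  rw [Matrix.trace_mul_cycle, unit_star_mul hU, Matrix.one_mul]

lemma conj_mul_conj {U : Matrix n n ℂ} (hU : U ∈ Matrix.unitaryGroup n ℂ) (E F : Matrix n n ℂ) :
    (U * E * Uᴴ) * (U * F * Uᴴ) = U * (E * F) * Uᴴ := by
  have h : Uᴴ * (U * (F * Uᴴ)) = F * Uᴴ := by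
    rw [← Matrix.mul_assoc, unit_star_mul hU, Matrix.one_mul]
  simp only [Matrix.mul_assoc, h]

lemma conj_isHermitian (U : Matrix n n ℂ) (s : n → ℝ) :
    (U * Matrix.diagonal (Complex.ofReal ∘ s) * Uᴴ).IsHermitian := by
  unfold Matrix.IsHermitian
  rw [Matrix.conjTranspose_mul, Matrix.conjTranspose_mul, Matrix.conjTranspose_conjTranspose,
    Matrix.diagonal_conjTranspose, Matrix.mul_assoc]
  have : star (Complex.ofReal ∘ s) = Complex.ofReal ∘ s := by
    funext i
    simp [Pi.star_apply]
  rw [this]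

lemma conj_posSemidef (U : Matrix n n ℂ) (s : n → ℝ) (hs : ∀ i, 0 ≤ s i) :
    (U * Matrix.diagonal (Complex.ofReal ∘ s) * Uᴴ).PosSemidef := by
  have hd : (Matrix.diagonal (Complex.ofReal ∘ s)).PosSemidef := by
    rw [Matrix.posSemidef_diagonal_iff]
    intro i
    simpa using Complex.zero_le_real.mpr (hs i)
  simpa using hd.mul_mul_conjTranspose_same U

lemma unitary_col_sum {W : Matrix n n ℂ} (hW : W ∈ Matrix.unitaryGroup n ℂ) (j : n) :
    ∑ i, ‖W i j‖ ^ 2 = 1 := by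
  have h := congrFun (congrFun (unit_star_mul hW) j) j
  simp only [Matrix.mul_apply, Matrix.conjTranspose_apply, Matrix.one_apply_eq] at h
  have key : ∀ i : n, star (W i j) * W i j = ((‖W i j‖ ^ 2 : ℝ) : ℂ) := by
    intro i
    rw [RCLike.star_def, ← Complex.normSq_eq_conj_mul_self, Complex.normSq_eq_norm_sq]
  simp only [key, ← Complex.ofReal_sum] at h
  exact_mod_cast h

lemma trace_conj_diag_mul {U V : Matrix n n ℂ} (hU : U ∈ Matrix.unitaryGroup n ℂ)
    (hV : V ∈ Matrix.unitaryGroup n ℂ) (s e : n → ℝ) :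
    ((V * Matrix.diagonal (Complex.ofReal ∘ s) * Vᴴ) *
      (U * Matrix.diagonal (Complex.ofReal ∘ e) * Uᴴ)).trace
      = ((∑ i, ∑ j, s i * e j * ‖(Vᴴ * U) i j‖ ^ 2 : ℝ) : ℂ) := by
  set W := Vᴴ * U with hWdef
  have hUh : Uᴴ = Wᴴ * Vᴴ := by
    rw [hWdef, Matrix.conjTranspose_mul, Matrix.conjTranspose_conjTranspose, Matrix.mul_assoc,
      unit_mul_star hV, Matrix.mul_one]
  have hstep : (V * Matrix.diagonal (Complex.ofReal ∘ s) * Vᴴ) *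
      (U * Matrix.diagonal (Complex.ofReal ∘ e) * Uᴴ)
      = V * (Matrix.diagonal (Complex.ofReal ∘ s) *
          (W * Matrix.diagonal (Complex.ofReal ∘ e) * Wᴴ)) * Vᴴ := by
    rw [hUh, hWdef]
    simp only [Matrix.mul_assoc]
  rw [hstep, trace_conj hV]
  have hentry : ∀ i, (W * Matrix.diagonal (Complex.ofReal ∘ e) * Wᴴ) i i
      = ((∑ j, e j * ‖W i j‖ ^ 2 : ℝ) : ℂ) := by
    intro i
    rw [Matrix.mul_apply]
    push_cast
    refine Finset.sum_congr rfl fun j _ => ?_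
    rw [Matrix.mul_diagonal, Matrix.conjTranspose_apply, Function.comp_apply]
    have hc : W i j * (starRingEnd ℂ) (W i j) = ((‖W i j‖ ^ 2 : ℝ) : ℂ) := by
      rw [Complex.mul_conj, Complex.normSq_eq_norm_sq]
    calc W i j * (e j : ℂ) * star (W i j) = (e j : ℂ) * (W i j * (starRingEnd ℂ) (W i j)) := by
          rw [RCLike.star_def]; ring
      _ = (e j : ℂ) * ((‖W i j‖ ^ 2 : ℝ) : ℂ) := by rw [hc]
      _ = _ := by push_cast; ring
  rw [Matrix.trace]
  push_cast
  refine Finset.sum_congr rfl fun i _ => ?_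
  rw [Matrix.diag_apply, Matrix.mul_apply]
  rw [Finset.sum_eq_single i]
  · rw [Matrix.diagonal_apply_eq, hentry i, Function.comp_apply]
    push_cast
    rw [Finset.mul_sum]
    refine Finset.sum_congr rfl fun j _ => ?_
    ring
  · intro b _ hb
    rw [Matrix.diagonal_apply_ne _ (Ne.symm hb), zero_mul]
  · intro h; exact absurd (Finset.mem_univ i) h

lemma spectral' {X : Matrix n n ℂ} (hX : X.IsHermitian) :
    X = (Matrix.IsHermitian.eigenvectorUnitary hX : Matrix n n ℂ) *
      Matrix.diagonal (Complex.ofReal ∘ hX.eigenvalues) *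
      (Matrix.IsHermitian.eigenvectorUnitary hX : Matrix n n ℂ)ᴴ := by
  have h := hX.spectral_theorem
  rw [Unitary.conjStarAlgAut_apply, Matrix.star_eq_conjTranspose] at h
  exact h

lemma eigU_mem {X : Matrix n n ℂ} (hX : X.IsHermitian) :
    (Matrix.IsHermitian.eigenvectorUnitary hX : Matrix n n ℂ) ∈ Matrix.unitaryGroup n ℂ :=
  (Matrix.IsHermitian.eigenvectorUnitary hX).2

lemma retr_conj_le {U V : Matrix n n ℂ} (hU : U ∈ Matrix.unitaryGroup n ℂ)
    (hV : V ∈ Matrix.unitaryGroup n ℂ) (s e : n → ℝ) (hs : ∀ i, |s i| ≤ 1) :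
    (((V * Matrix.diagonal (Complex.ofReal ∘ s) * Vᴴ) *
      (U * Matrix.diagonal (Complex.ofReal ∘ e) * Uᴴ)).trace).re ≤ ∑ j, |e j| := by
  rw [trace_conj_diag_mul hU hV, Complex.ofReal_re]
  have hW : Vᴴ * U ∈ Matrix.unitaryGroup n ℂ := by
    rw [← Matrix.star_eq_conjTranspose]
    exact mul_mem (Unitary.star_mem hV) hU
  calc ∑ i, ∑ j, s i * e j * ‖(Vᴴ * U) i j‖ ^ 2
      ≤ ∑ i, ∑ j, |e j| * ‖(Vᴴ * U) i j‖ ^ 2 := by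
        refine Finset.sum_le_sum fun i _ => Finset.sum_le_sum fun j _ => ?_
        refine mul_le_mul_of_nonneg_right ?_ (by positivity)
        calc s i * e j ≤ |s i * e j| := le_abs_self _
          _ = |s i| * |e j| := abs_mul _ _
          _ ≤ 1 * |e j| := mul_le_mul_of_nonneg_right (hs i) (abs_nonneg _)
          _ = |e j| := one_mul _
    _ = ∑ j, |e j| := by
        rw [Finset.sum_comm]
        calc ∑ j, ∑ i, |e j| * ‖(Vᴴ * U) i j‖ ^ 2
            = ∑ j, |e j| * ∑ i, ‖(Vᴴ * U) i j‖ ^ 2 := by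
              refine Finset.sum_congr rfl fun j _ => ?_
              rw [Finset.mul_sum]
          _ = ∑ j, |e j| := by
              refine Finset.sum_congr rfl fun j _ => ?_
              rw [unitary_col_sum hW, mul_one]

noncomputable def sgn {X : Matrix n n ℂ} (hX : X.IsHermitian) : n → ℝ :=
  fun i => if hX.eigenvalues i < 0 then -1 else 1

noncomputable def signM {X : Matrix n n ℂ} (hX : X.IsHermitian) : Matrix n n ℂ :=
  (Matrix.IsHermitian.eigenvectorUnitary hX : Matrix n n ℂ) *
    Matrix.diagonal (Complex.ofReal ∘ sgn hX) *
    (Matrix.IsHermitian.eigenvectorUnitary hX : Matrix n n ℂ)ᴴ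

lemma sgn_abs_le {X : Matrix n n ℂ} (hX : X.IsHermitian) (i : n) : |sgn hX i| ≤ 1 := by
  unfold sgn; split <;> simp

lemma sgn_mul_eig {X : Matrix n n ℂ} (hX : X.IsHermitian) (i : n) :
    sgn hX i * hX.eigenvalues i = |hX.eigenvalues i| := by
  unfold sgn
  split
  · rw [abs_of_neg (by assumption)]; ring
  · rw [_root_.abs_of_nonneg (le_of_not_gt (by assumption))]; ring

lemma sgn_sq {X : Matrix n n ℂ} (hX : X.IsHermitian) (i : n) : sgn hX i * sgn hX i = 1 := by
  unfold sgn; split <;> norm_num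

lemma signM_isHermitian {X : Matrix n n ℂ} (hX : X.IsHermitian) : (signM hX).IsHermitian :=
  conj_isHermitian _ _

lemma signM_mul_self {X : Matrix n n ℂ} (hX : X.IsHermitian) : signM hX * signM hX = 1 := by
  unfold signM
  rw [conj_mul_conj (eigU_mem hX), Matrix.diagonal_mul_diagonal]
  have : (fun i => (Complex.ofReal ∘ sgn hX) i * (Complex.ofReal ∘ sgn hX) i) = fun _ => (1 : ℂ) := by
    funext i
    simp only [Function.comp_apply, ← Complex.ofReal_mul, sgn_sq hX i, Complex.ofReal_one]
  rw [this, ← Matrix.diagonal_one]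
  have := unit_mul_star (eigU_mem hX)
  rw [Matrix.diagonal_one, Matrix.mul_one, this]

lemma trace_signM_mul {X : Matrix n n ℂ} (hX : X.IsHermitian) :
    (signM hX * X).trace = ((∑ i, |hX.eigenvalues i| : ℝ) : ℂ) := by
  have h := spectral' hX
  have step : (signM hX * X).trace = (signM hX *
      ((Matrix.IsHermitian.eigenvectorUnitary hX : Matrix n n ℂ) *
        Matrix.diagonal (Complex.ofReal ∘ hX.eigenvalues) *
        (Matrix.IsHermitian.eigenvectorUnitary hX : Matrix n n ℂ)ᴴ)).trace := by
    rw [← h]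
  rw [step]
  unfold signM
  rw [conj_mul_conj (eigU_mem hX), Matrix.diagonal_mul_diagonal, trace_conj (eigU_mem hX),
    Matrix.trace_diagonal]
  push_cast
  refine Finset.sum_congr rfl fun i _ => ?_
  simp only [Function.comp_apply, ← Complex.ofReal_mul, sgn_mul_eig hX i]

lemma signM_retr_le {X Y : Matrix n n ℂ} (hX : X.IsHermitian) (hY : Y.IsHermitian) :
    ((signM hX * Y).trace).re ≤ ∑ j, |hY.eigenvalues j| := by
  conv_lhs => rw [spectral' hY]
  exact retr_conj_le (eigU_mem hY) (eigU_mem hX) _ _ (sgn_abs_le hX)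

lemma trace_herm {X : Matrix n n ℂ} (hX : X.IsHermitian) :
    X.trace = ((∑ i, hX.eigenvalues i : ℝ) : ℂ) := by
  conv_lhs => rw [spectral' hX]
  rw [trace_conj (eigU_mem hX), Matrix.trace_diagonal]
  push_cast
  rfl

lemma retr_psd_nonneg {X : Matrix n n ℂ} (hX : X.PosSemidef) : 0 ≤ (X.trace).re := by
  rw [trace_herm hX.1, Complex.ofReal_re]
  exact Finset.sum_nonneg fun i _ => hX.eigenvalues_nonneg i

lemma retr_mul_nonneg {X Y : Matrix n n ℂ} (hX : X.PosSemidef) (hY : Y.PosSemidef) :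
    0 ≤ ((X * Y).trace).re := by
  have h1 : X * Y = (psdSqrt hX) * (psdSqrt hX) * Y := by rw [(psdSqrt_mul_self hX)]
  have h2 : ((psdSqrt hX) * (psdSqrt hX) * Y).trace = ((psdSqrt hX) * Y * (psdSqrt hX)).trace := by
    rw [Matrix.trace_mul_cycle (psdSqrt hX) (psdSqrt hX) Y, Matrix.trace_mul_cycle Y (psdSqrt hX) (psdSqrt hX)]
  have h3 : ((psdSqrt hX) * Y * (psdSqrt hX)).PosSemidef := by
    have := hY.conjTranspose_mul_mul_same (psdSqrt hX)
    rwa [(posSemidef_psdSqrt hX).1.eq] at this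
  rw [h1, h2]
  exact retr_psd_nonneg h3

lemma sqrt_congr {A B : Matrix n n ℂ} (h : A = B) (hA : A.PosSemidef) (hB : B.PosSemidef) :
    (psdSqrt hA) = (psdSqrt hB) := by subst h; rfl

variable {d : ℕ}

lemma traceNorm_neg (A : Matrix (Fin d) (Fin d) ℂ) : traceNorm (-A) = traceNorm A := by
  unfold traceNorm
  rw [sqrt_congr (show (-A)ᴴ * (-A) = Aᴴ * A by simp) _ (Matrix.posSemidef_conjTranspose_mul_self A)]

lemma herm_sq (X : Matrix (Fin d) (Fin d) ℂ) (hX : X.IsHermitian) :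
    Xᴴ * X = (Matrix.IsHermitian.eigenvectorUnitary hX : Matrix (Fin d) (Fin d) ℂ) *
      Matrix.diagonal (fun i => ((hX.eigenvalues i : ℂ) * (hX.eigenvalues i : ℂ))) *
      (Matrix.IsHermitian.eigenvectorUnitary hX : Matrix (Fin d) (Fin d) ℂ)ᴴ := by
  rw [Matrix.IsHermitian.eq hX]
  conv_lhs => rw [spectral' hX]
  rw [conj_mul_conj (eigU_mem hX), Matrix.diagonal_mul_diagonal]
  rfl

lemma traceNorm_herm {X : Matrix (Fin d) (Fin d) ℂ} (hX : X.IsHermitian) :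
    traceNorm X = ∑ i, |hX.eigenvalues i| := by
  set U := (Matrix.IsHermitian.eigenvectorUnitary hX : Matrix (Fin d) (Fin d) ℂ) with hU
  set Q := U * Matrix.diagonal (Complex.ofReal ∘ fun i => |hX.eigenvalues i|) * Uᴴ with hQdef
  have hQ : Q.PosSemidef := conj_posSemidef _ _ (fun i => abs_nonneg _)
  have hQ2 : Q ^ 2 = Xᴴ * X := by
    rw [pow_two, hQdef, conj_mul_conj (eigU_mem hX), Matrix.diagonal_mul_diagonal,
      herm_sq X hX]
    congr 2
    funext i
    simp only [Function.comp_apply, ← Complex.ofReal_mul, abs_mul_abs_self]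
  have heq := eq_psdSqrt_of_sq_eq hQ (Matrix.posSemidef_conjTranspose_mul_self X) hQ2
  unfold traceNorm
  rw [← heq, hQdef, trace_conj (eigU_mem hX), Matrix.trace_diagonal]
  rw [show (∑ i, (Complex.ofReal ∘ fun i => |hX.eigenvalues i|) i)
      = ((∑ i, |hX.eigenvalues i| : ℝ) : ℂ) by push_cast; rfl, Complex.ofReal_re]

lemma traceNorm_psd {X : Matrix (Fin d) (Fin d) ℂ} (hX : X.PosSemidef) :
    traceNorm X = (X.trace).re := by
  rw [traceNorm_herm hX.1, trace_herm hX.1, Complex.ofReal_re]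
  exact Finset.sum_congr rfl fun i _ => abs_of_nonneg (hX.eigenvalues_nonneg i)

lemma traceNorm_add_le {X Y : Matrix (Fin d) (Fin d) ℂ} (hX : X.IsHermitian)
    (hY : Y.IsHermitian) : traceNorm (X + Y) ≤ traceNorm X + traceNorm Y := by
  have hZ : (X + Y).IsHermitian := hX.add hY
  rw [traceNorm_herm hZ, traceNorm_herm hX, traceNorm_herm hY]
  have h1 : (∑ i, |hZ.eigenvalues i|) = ((signM hZ * (X + Y)).trace).re := by
    rw [trace_signM_mul hZ, Complex.ofReal_re]
  have h2 : (signM hZ * (X + Y)).trace = (signM hZ * X).trace + (signM hZ * Y).trace := by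
    rw [mul_add, Matrix.trace_add]
  rw [h1, h2, Complex.add_re]
  exact add_le_add (signM_retr_le hZ hX) (signM_retr_le hZ hY)

/-- `√M - M` is PSD when `0 ≤ M ≤ 1`. -/
lemma sqrt_sub_psd {M : Matrix n n ℂ} (hM : M.PosSemidef) (hM1 : (1 - M).PosSemidef) :
    ((psdSqrt hM) - M).PosSemidef := by
  set U := (Matrix.IsHermitian.eigenvectorUnitary hM.1 : Matrix n n ℂ) with hU
  set e := hM.1.eigenvalues with he
  have hd1 : ∀ i, e i ≤ 1 := by
    intro i
    have hconj : (Uᴴ * (1 - M) * U).PosSemidef := hM1.conjTranspose_mul_mul_same U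
    have heq : Uᴴ * (1 - M) * U = Matrix.diagonal (fun i => ((1 - e i : ℝ) : ℂ)) := by
      rw [Matrix.mul_sub, Matrix.mul_one, Matrix.sub_mul, unit_star_mul (eigU_mem hM.1)]
      have h2 : Uᴴ * M * U = Matrix.diagonal (Complex.ofReal ∘ e) := by
        conv_lhs => rw [spectral' hM.1]
        rw [← hU, ← he]
        calc Uᴴ * (U * Matrix.diagonal (Complex.ofReal ∘ e) * Uᴴ) * U
            = (Uᴴ * U) * Matrix.diagonal (Complex.ofReal ∘ e) * (Uᴴ * U) := by
              simp only [Matrix.mul_assoc]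
          _ = Matrix.diagonal (Complex.ofReal ∘ e) := by
              rw [unit_star_mul (eigU_mem hM.1), Matrix.one_mul, Matrix.mul_one]
      rw [h2]
      ext i j
      by_cases hij : i = j
      · subst hij; simp [Matrix.diagonal_apply_eq, Matrix.one_apply_eq]
      · simp [Matrix.diagonal_apply_ne _ hij, Matrix.one_apply_ne hij]
    rw [heq, Matrix.posSemidef_diagonal_iff] at hconj
    have := hconj i
    rw [Complex.zero_le_real] at this
    linarith
  have hQ : (psdSqrt hM) = U * Matrix.diagonal (Complex.ofReal ∘ (Real.sqrt ∘ e)) * Uᴴ := by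
    rw [psdSqrt, Matrix.star_eq_conjTranspose]
  have hMeq : M = U * Matrix.diagonal (Complex.ofReal ∘ e) * Uᴴ := spectral' hM.1
  have hdiff : (psdSqrt hM) - M
      = U * Matrix.diagonal (Complex.ofReal ∘ (fun i => Real.sqrt (e i) - e i)) * Uᴴ := by
    rw [hQ]
    conv_lhs => rw [hMeq]
    rw [← Matrix.sub_mul, ← Matrix.mul_sub, Matrix.diagonal_sub]
    have hfun : (fun i => (Complex.ofReal ∘ Real.sqrt ∘ e) i - (Complex.ofReal ∘ e) i)
        = Complex.ofReal ∘ (fun i => Real.sqrt (e i) - e i) := by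
      funext i; simp [Complex.ofReal_sub]
    rw [hfun]
  rw [hdiff]
  refine conj_posSemidef U _ fun i => ?_
  have h0 := hM.eigenvalues_nonneg i
  rw [← he] at h0
  have h2 : e i ≤ Real.sqrt (e i) := by
    have h3 := Real.sqrt_le_sqrt (show e i * e i ≤ e i by nlinarith [hd1 i])
    rwa [Real.sqrt_mul_self h0] at h3
  linarith

lemma gentle {d : ℕ} {ρ M : Matrix (Fin d) (Fin d) ℂ} (hρp : ρ.PosSemidef) (hρt : ρ.trace = 1)
    (hM : M.PosSemidef) (hM1 : (1 - M).PosSemidef) {lam : ℝ}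
    (h : 1 - ((ρ * M).trace).re ≤ lam) :
    traceNorm (ρ - (psdSqrt hM) * ρ * (psdSqrt hM)) ≤ 2 * Real.sqrt lam := by
  set Q := (psdSqrt hM) with hQdef
  have hQpsd : Q.PosSemidef := (posSemidef_psdSqrt hM)
  have hQh : Q.IsHermitian := hQpsd.1
  have hQQ : Q * Q = M := (psdSqrt_mul_self hM)
  set R := (psdSqrt hρp) with hRdef
  have hRpsd : R.PosSemidef := (posSemidef_psdSqrt hρp)
  have hRh : R.IsHermitian := hRpsd.1
  have hRR : R * R = ρ := (psdSqrt_mul_self hρp)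
  set G : Matrix (Fin d) (Fin d) ℂ := 1 - Q with hGdef
  have hGh : G.IsHermitian := Matrix.isHermitian_one.sub hQh
  -- key smallness
  have key_small : ((ρ * (G * G)).trace).re ≤ lam := by
    have expand : ρ * (G * G) = ρ - ρ * Q - ρ * Q + ρ * M := by
      rw [hGdef, ← hQQ]; noncomm_ring
    have hQMpsd : (Q - M).PosSemidef := sqrt_sub_psd hM hM1
    have h1 : 0 ≤ ((ρ * (Q - M)).trace).re := retr_mul_nonneg hρp hQMpsd
    have h2 : ρ * (Q - M) = ρ * Q - ρ * M := by rw [Matrix.mul_sub]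
    rw [h2, Matrix.trace_sub, Complex.sub_re] at h1
    rw [expand, Matrix.trace_add, Matrix.trace_sub, Matrix.trace_sub, hρt]
    simp only [Complex.add_re, Complex.sub_re, Complex.one_re]
    linarith
  have hρM0 : 0 ≤ ((ρ * M).trace).re := retr_mul_nonneg hρp hM
  have hρM1 : ((ρ * M).trace).re ≤ 1 := by
    have h1 : 0 ≤ ((ρ * (1 - M)).trace).re := retr_mul_nonneg hρp hM1
    have h2 : ρ * (1 - M) = ρ - ρ * M := by rw [Matrix.mul_sub, Matrix.mul_one]
    rw [h2, Matrix.trace_sub, Complex.sub_re, hρt] at h1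
    simp only [Complex.one_re] at h1
    linarith
  have ks0 : 0 ≤ ((ρ * (G * G)).trace).re := by
    have : ρ * (G * G) = ρ * (G * G) := rfl
    have hGG : (G * G).PosSemidef := by
      have := (Matrix.PosSemidef.one (n := Fin d) (R := ℂ)).conjTranspose_mul_mul_same G
      rwa [Matrix.mul_one, hGh.eq] at this
    exact retr_mul_nonneg hρp hGG
  -- Hermitian difference
  have hQρQ : (Q * ρ * Q).PosSemidef := by
    have := hρp.conjTranspose_mul_mul_same Q
    rwa [hQh.eq] at this
  have hH : (ρ - Q * ρ * Q).IsHermitian := hρp.1.sub hQρQ.1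
  set S := signM hH with hSdef
  have hSh : S.IsHermitian := signM_isHermitian hH
  have hSS : S * S = 1 := signM_mul_self hH
  -- trace norm as sign trace
  have tnH : traceNorm (ρ - Q * ρ * Q) = ((S * (ρ - Q * ρ * Q)).trace).re := by
    rw [traceNorm_herm hH, trace_signM_mul hH, Complex.ofReal_re]
  -- split the trace
  have cyc : (S * (Q * ρ * Q)).trace = ((Q * (S * Q)) * ρ).trace := by
    calc (S * (Q * ρ * Q)).trace = ((S * Q * ρ) * Q).trace := by
          rw [Matrix.mul_assoc, Matrix.mul_assoc, Matrix.mul_assoc]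
      _ = (Q * (S * Q * ρ)).trace := Matrix.trace_mul_comm _ _
      _ = ((Q * (S * Q)) * ρ).trace := congrArg Matrix.trace (by noncomm_ring)
  have hsplit : (S * (ρ - Q * ρ * Q)).trace
      = ((S * G) * ρ).trace + ((G * (S * Q)) * ρ).trace := by
    have e1 : S * (ρ - Q * ρ * Q) = S * ρ - S * (Q * ρ * Q) := by rw [Matrix.mul_sub]
    have e2 : (S * G) * ρ + (G * (S * Q)) * ρ = S * ρ - (Q * (S * Q)) * ρ := by
      rw [hGdef]; noncomm_ring
    rw [e1, Matrix.trace_sub, cyc, ← Matrix.trace_sub, ← e2, Matrix.trace_add]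
  -- Cauchy-Schwarz for term 1
  have hA1 : (R * G * S)ᴴ = S * G * R := by
    rw [Matrix.conjTranspose_mul, Matrix.conjTranspose_mul, hSh.eq, hGh.eq, hRh.eq,
      Matrix.mul_assoc]
  have term1 : |(((S * G) * ρ).trace).re| ≤ Real.sqrt lam := by
    have ht : (S * G) * ρ = (R * G * S)ᴴ * R := by
      rw [hA1, ← hRR]; noncomm_ring
    have hAA : (((R * G * S)ᴴ * (R * G * S)).trace).re = ((ρ * (G * G)).trace).re := by
      have e3 : (R * G * S)ᴴ * (R * G * S) = S * (G * (R * R) * G) * S := by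
        rw [hA1]; noncomm_ring
      rw [e3, hRR]
      have e4 : (S * (G * ρ * G) * S).trace = ((S * S) * (G * ρ * G)).trace := by
        rw [Matrix.trace_mul_cycle]
      rw [e4, hSS, Matrix.one_mul]
      have e5 : (G * ρ * G).trace = (ρ * (G * G)).trace := by
        rw [Matrix.trace_mul_cycle]
        exact Matrix.trace_mul_comm _ _
      rw [e5]
    have hBB : ((Rᴴ * R).trace).re = 1 := by
      rw [hRh.eq, hRR, hρt, Complex.one_re]
    calc |(((S * G) * ρ).trace).re| = |(((R * G * S)ᴴ * R).trace).re| := by rw [ht]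
      _ ≤ Real.sqrt ((((R * G * S)ᴴ * (R * G * S)).trace).re)
          * Real.sqrt (((Rᴴ * R).trace).re) := trace_CS _ _
      _ = Real.sqrt (((ρ * (G * G)).trace).re) * 1 := by rw [hAA, hBB, Real.sqrt_one]
      _ ≤ Real.sqrt lam * 1 := by
          exact mul_le_mul_of_nonneg_right (Real.sqrt_le_sqrt key_small) (by norm_num)
      _ = Real.sqrt lam := mul_one _
  -- Cauchy-Schwarz for term 2
  have term2 : |(((G * (S * Q)) * ρ).trace).re| ≤ Real.sqrt lam := by
    have hA2 : (G * R)ᴴ = R * G := by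
      rw [Matrix.conjTranspose_mul, hGh.eq, hRh.eq]
    have ht : ((G * (S * Q)) * ρ).trace = ((G * R)ᴴ * (S * Q * R)).trace := by
      have e6 : (G * (S * Q)) * ρ = ((G * (S * Q)) * R) * R := by
        rw [← hRR]; noncomm_ring
      rw [e6, Matrix.trace_mul_comm, hA2]
      congr 1
      noncomm_ring
    have hAA : (((G * R)ᴴ * (G * R)).trace).re = ((ρ * (G * G)).trace).re := by
      rw [hA2]
      have e7 : (R * G) * (G * R) = R * (G * G) * R := by noncomm_ring
      rw [e7]
      have e8 : (R * (G * G) * R).trace = (ρ * (G * G)).trace := by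
        rw [Matrix.trace_mul_cycle, hRR]
      rw [e8]
    have hBB : (((S * Q * R)ᴴ * (S * Q * R)).trace).re = ((ρ * M).trace).re := by
      have e9 : (S * Q * R)ᴴ = R * Q * S := by
        rw [Matrix.conjTranspose_mul, Matrix.conjTranspose_mul, hSh.eq, hQh.eq, hRh.eq,
          Matrix.mul_assoc]
      have e10 : (S * Q * R)ᴴ * (S * Q * R) = R * Q * (S * S) * Q * R := by
        rw [e9]; noncomm_ring
      rw [e10, hSS]
      have e11 : R * Q * 1 * Q * R = R * M * R := by rw [← hQQ]; noncomm_ring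
      rw [e11]
      have e12 : (R * M * R).trace = (ρ * M).trace := by
        rw [Matrix.trace_mul_cycle, hRR]
      rw [e12]
    calc |(((G * (S * Q)) * ρ).trace).re| = |(((G * R)ᴴ * (S * Q * R)).trace).re| := by rw [ht]
      _ ≤ Real.sqrt ((((G * R)ᴴ * (G * R)).trace).re)
          * Real.sqrt ((((S * Q * R)ᴴ * (S * Q * R)).trace).re) := trace_CS _ _
      _ ≤ Real.sqrt lam * 1 := by
          refine mul_le_mul ?_ ?_ (Real.sqrt_nonneg _) (Real.sqrt_nonneg _)
          · rw [hAA]; exact Real.sqrt_le_sqrt key_small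
          · rw [hBB]; exact Real.sqrt_le_one.mpr hρM1
      _ = Real.sqrt lam := mul_one _
  -- combine
  rw [tnH, hsplit, Complex.add_re]
  calc (((S * G) * ρ).trace).re + (((G * (S * Q)) * ρ).trace).re
      ≤ |(((S * G) * ρ).trace).re| + |(((G * (S * Q)) * ρ).trace).re| :=
        add_le_add (le_abs_self _) (le_abs_self _)
    _ ≤ Real.sqrt lam + Real.sqrt lam := add_le_add term1 term2
    _ = 2 * Real.sqrt lam := by ring

end Aux

/-- Tender measurement lemma: if the POVM `(D_b)` identifies `φ(a)` from `ρ_a`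
with error probability at most `λ`, then the induced operation disturbs each
`ρ_a` by at most `√(8λ) + λ` in trace norm. -/
theorem tender_measurement {D : ℕ} {A B : Type} [Fintype A] [Fintype B]
    (ρ : A → Matrix (Fin D) (Fin D) ℂ) (hρ : ∀ a, IsDensity (ρ a))
    (Dv : B → Matrix (Fin D) (Fin D) ℂ) (hD : ∀ b, (Dv b).PosSemidef)
    (hDsum : ∑ b, Dv b = 1)
    (φ : A → B) (lam : ℝ) (hlam : 0 < lam)
    (herr : ∀ a, 1 - ((ρ a * Dv (φ a)).trace).re ≤ lam) :
    ∀ a, traceNorm (ρ a - ∑ b, (psdSqrt (hD b)) * ρ a * (psdSqrt (hD b)))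
        ≤ Real.sqrt (8 * lam) + lam := by
  intro a
  classical
  have psd_sum : ∀ {ι : Type} [Fintype ι] (s : Finset ι) (f : ι → Matrix (Fin D) (Fin D) ℂ),
      (∀ i ∈ s, (f i).PosSemidef) → (∑ i ∈ s, f i).PosSemidef := by
    intro ι _ s f hf
    exact Finset.sum_induction f _ (fun x y hx hy => hx.add hy) Matrix.PosSemidef.zero hf
  have hsumcompl : ∑ b ∈ ({φ a}ᶜ : Finset B), Dv b = 1 - Dv (φ a) := by
    have h1 := Fintype.sum_eq_add_sum_compl (φ a) Dv
    rw [hDsum] at h1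
    rw [h1]
    abel
  have hM1 : (1 - Dv (φ a)).PosSemidef := by
    rw [← hsumcompl]
    exact psd_sum _ _ fun b _ => hD b
  have hg := gentle (hρ a).1 (hρ a).2 (hD (φ a)) hM1 (herr a)
  set Y := ∑ b ∈ ({φ a}ᶜ : Finset B), (psdSqrt (hD b)) * ρ a * (psdSqrt (hD b)) with hYdef
  have hterm : ∀ b : B, ((psdSqrt (hD b)) * ρ a * (psdSqrt (hD b))).PosSemidef := by
    intro b
    have := (hρ a).1.conjTranspose_mul_mul_same (psdSqrt (hD b))
    rwa [(posSemidef_psdSqrt (hD b)).1.eq] at this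
  have hYpsd : Y.PosSemidef := psd_sum _ _ fun b _ => hterm b
  have hYle : traceNorm Y ≤ lam := by
    rw [traceNorm_psd hYpsd]
    have htr : ∀ b : B, ((psdSqrt (hD b)) * ρ a * (psdSqrt (hD b))).trace = (ρ a * Dv b).trace := by
      intro b
      rw [Matrix.trace_mul_cycle, (psdSqrt_mul_self (hD b)), Matrix.trace_mul_comm]
    have hYtr : Y.trace = (ρ a * (1 - Dv (φ a))).trace := by
      rw [hYdef, Matrix.trace_sum]
      rw [show (∑ b ∈ ({φ a}ᶜ : Finset B), ((psdSqrt (hD b)) * ρ a * (psdSqrt (hD b))).trace)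
          = ∑ b ∈ ({φ a}ᶜ : Finset B), (ρ a * Dv b).trace from
        Finset.sum_congr rfl fun b _ => htr b]
      rw [← Matrix.trace_sum, ← Finset.mul_sum, hsumcompl]
    rw [hYtr, Matrix.mul_sub, Matrix.mul_one, Matrix.trace_sub, Complex.sub_re, (hρ a).2,
      Complex.one_re]
    exact herr a
  have hHerm1 : (ρ a - (psdSqrt (hD (φ a))) * ρ a * (psdSqrt (hD (φ a)))).IsHermitian :=
    (hρ a).1.1.sub (hterm (φ a)).1
  have hHerm2 : (-Y).IsHermitian := hYpsd.1.neg
  have hsplit : (ρ a - ∑ b, (psdSqrt (hD b)) * ρ a * (psdSqrt (hD b)))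
      = (ρ a - (psdSqrt (hD (φ a))) * ρ a * (psdSqrt (hD (φ a)))) + (-Y) := by
    rw [Fintype.sum_eq_add_sum_compl (φ a) (fun b => (psdSqrt (hD b)) * ρ a * (psdSqrt (hD b))), hYdef]
    abel
  rw [hsplit]
  have hnum : 2 * Real.sqrt lam ≤ Real.sqrt (8 * lam) := by
    have h4 : Real.sqrt (4 * lam) = 2 * Real.sqrt lam := by
      rw [Real.sqrt_mul (by norm_num) lam]
      congr 1
      rw [show (4 : ℝ) = 2 ^ 2 by norm_num, Real.sqrt_sq (by norm_num)]
    rw [← h4]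
    exact Real.sqrt_le_sqrt (by linarith)
  calc traceNorm ((ρ a - (psdSqrt (hD (φ a))) * ρ a * (psdSqrt (hD (φ a)))) + (-Y))
      ≤ traceNorm (ρ a - (psdSqrt (hD (φ a))) * ρ a * (psdSqrt (hD (φ a)))) + traceNorm (-Y) :=
        traceNorm_add_le hHerm1 hHerm2
    _ = traceNorm (ρ a - (psdSqrt (hD (φ a))) * ρ a * (psdSqrt (hD (φ a)))) + traceNorm Y := by
        rw [traceNorm_neg]
    _ ≤ 2 * Real.sqrt lam + lam := add_le_add hg hYle
    _ ≤ Real.sqrt (8 * lam) + lam := add_le_add hnum le_rfl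

end QIT
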